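/- Let f ∈ 𝕋[x] be a nonconstant polynomial in one variable whose constant coefficient is -∞ (i.e. f has no constant monomial). Then for every a ∈ ℝ there exists r ∈ 𝕋 such that f(r) = a^ν, the ghost element of value a. -/

import Mathlib

/-- The extended tropical semiring `𝕋`: tangible reals `(a, false)`,
ghost reals `(a, true)`, and `none` = `-∞`. -/
def T : Type := Option (ℝ × Bool)

namespace T

/-- The tangible element of value `a`. -/
def tang (a : ℝ) : T := some (a, false)

/-- The ghost element `a^ν` of value `a`. -/
def ghost (a : ℝ) : T := some (a, true)

/-- Tropical addition on `𝕋`. -/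
noncomputable def add : T → T → T
  | none, y => y
  | some p, none => some p
  | some (a, s), some (b, t) =>
      if a < b then some (b, t) else if b < a then some (a, s) else some (a, true)

/-- Tropical multiplication on `𝕋`. -/
noncomputable def mul : T → T → T
  | none, _ => none
  | some _, none => none
  | some (a, s), some (b, t) => some (a + b, s || t)

lemma add_assoc' : ∀ x y z : T, add (add x y) z = add x (add y z) := by
  show ∀ x y z : Option (ℝ × Bool), @Eq (Option (ℝ × Bool)) (add (add x y) z) (add x (add y z))
  rintro (_ | ⟨a, s⟩) (_ | ⟨b, t⟩) (_ | ⟨c, u⟩) <;>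
    simp only [add] <;>
    (try unfold T) <;>
    (try split_ifs) <;>
    simp only [add] <;>
    (try unfold T) <;>
    (try split_ifs) <;>
    first
      | rfl
      | (exfalso; linarith)
      | (refine congrArg some ?_; refine Prod.ext ?_ ?_ <;>
          first | rfl | linarith | simp)

lemma add_comm' : ∀ x y : T, add x y = add y x := by
  show ∀ x y : Option (ℝ × Bool), @Eq (Option (ℝ × Bool)) (add x y) (add y x)
  rintro (_ | ⟨a, s⟩) (_ | ⟨b, t⟩) <;>
    simp only [add] <;>
    (try unfold T) <;>
    (try split_ifs) <;>
    first
      | rfl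
      | (exfalso; linarith)
      | (refine congrArg some ?_; refine Prod.ext ?_ ?_ <;>
          first | rfl | linarith | simp)

lemma mul_assoc' : ∀ x y z : T, mul (mul x y) z = mul x (mul y z) := by
  rintro (_ | ⟨a, s⟩) (_ | ⟨b, t⟩) (_ | ⟨c, u⟩) <;>
    simp [mul, add_assoc, Bool.or_assoc] <;> rfl

lemma mul_comm' : ∀ x y : T, mul x y = mul y x := by
  rintro (_ | ⟨a, s⟩) (_ | ⟨b, t⟩) <;> simp [mul, add_comm, Bool.or_comm] <;> rfl

lemma left_distrib' : ∀ x y z : T, mul x (add y z) = add (mul x y) (mul x z) := by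
  show ∀ x y z : Option (ℝ × Bool), @Eq (Option (ℝ × Bool)) (mul x (add y z)) (add (mul x y) (mul x z))
  rintro (_ | ⟨a, s⟩) (_ | ⟨b, t⟩) (_ | ⟨c, u⟩) <;>
    simp only [add, mul] <;>
    (try unfold T) <;>
    (try split_ifs) <;>
    simp only [add, mul] <;>
    (try unfold T) <;>
    (try split_ifs) <;>
    first
      | rfl
      | (exfalso; linarith)
      | (refine congrArg some ?_; refine Prod.ext ?_ ?_ <;>
          first | rfl | linarith | simp)

noncomputable instance : Zero T := ⟨none⟩
noncomputable instance : One T := ⟨some (0, false)⟩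
noncomputable instance : Add T := ⟨add⟩
noncomputable instance : Mul T := ⟨mul⟩

noncomputable instance : CommSemiring T where
  add := (· + ·)
  zero := 0
  add_assoc := add_assoc'
  zero_add := fun x => by cases x <;> rfl
  add_zero := fun x => by cases x <;> rfl
  add_comm := add_comm'
  mul := (· * ·)
  one := 1
  mul_assoc := mul_assoc'
  one_mul := fun x => by
    show mul (some (0, false)) x = x
    rcases x with _ | ⟨a, s⟩ <;> simp [mul] <;> rfl
  mul_one := fun x => by
    show mul x (some (0, false)) = x
    rcases x with _ | ⟨a, s⟩ <;> simp [mul] <;> rfl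
  mul_comm := mul_comm'
  zero_mul := fun x => by cases x <;> rfl
  mul_zero := fun x => by cases x <;> rfl
  left_distrib := left_distrib'
  right_distrib := fun x y z => by
    show mul (add x y) z = add (mul x z) (mul y z)
    rw [mul_comm', left_distrib', mul_comm' z x, mul_comm' z y]
  nsmul := nsmulRec

/-- Membership in the ghost part `𝕌̄ = 𝕌 ∪ {-∞}` of `𝕋`. -/
def isGhost : T → Prop
  | none => True
  | some (_, s) => s = true

/-- Membership in the tangible part `ℝ ∪ {-∞}` of `𝕋`. -/
def isTangible : T → Prop
  | none => True
  | some (_, s) => s = false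

/-- The underlying real value (junk value `0` at `-∞`); this is `π` on elements `≠ -∞`. -/
def val : T → ℝ
  | none => 0
  | some (a, _) => a

/-- The ghost map `ν`. -/
def nu : T → T
  | none => none
  | some (a, _) => some (a, true)

end T

namespace T

/-- The model value in the half line `[0,∞)`: `-∞ ↦ 0`, an element of value `a ↦ exp a`. -/
noncomputable def gval : T → ℝ
  | none => 0
  | some (a, _) => Real.exp a

lemma nu_isGhost : ∀ x : T, isGhost (nu x)
  | none => trivial
  | some (_, _) => rfl

lemma gval_injOn_tang : Set.InjOn gval {x : T | isTangible x} := by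
  rintro (_ | ⟨a, s⟩) hx (_ | ⟨b, t⟩) hy h <;>
    simp only [gval, Set.mem_setOf_eq, isTangible] at hx hy h
  · rfl
  · exact absurd h.symm (Real.exp_pos b).ne'
  · exact absurd h (Real.exp_pos a).ne'
  · rw [Real.exp_eq_exp] at h; subst hx; subst hy; subst h; rfl

lemma gval_injOn_ghost : Set.InjOn gval {x : T | isGhost x} := by
  rintro (_ | ⟨a, s⟩) hx (_ | ⟨b, t⟩) hy h <;>
    simp only [gval, Set.mem_setOf_eq, isGhost] at hx hy h
  · rfl
  · exact absurd h.symm (Real.exp_pos b).ne'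
  · exact absurd h (Real.exp_pos a).ne'
  · rw [Real.exp_eq_exp] at h; subst hx; subst hy; subst h; rfl

lemma gval_image_tang : gval '' {x : T | isTangible x} = Set.Ici 0 := by
  ext y
  constructor
  · rintro ⟨(_ | ⟨a, s⟩), hx, rfl⟩
    · exact Set.self_mem_Ici
    · exact le_of_lt (by simpa [gval] using Real.exp_pos a)
  · intro hy
    rcases eq_or_lt_of_le (Set.mem_Ici.mp hy : (0 : ℝ) ≤ y) with h | h
    · exact ⟨none, trivial, h⟩
    · exact ⟨some (Real.log y, false), rfl, by simp [gval, Real.exp_log h]⟩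

lemma gval_image_ghost : gval '' {x : T | isGhost x} = Set.Ici 0 := by
  ext y
  constructor
  · rintro ⟨(_ | ⟨a, s⟩), hx, rfl⟩
    · exact Set.self_mem_Ici
    · exact le_of_lt (by simpa [gval] using Real.exp_pos a)
  · intro hy
    rcases eq_or_lt_of_le (Set.mem_Ici.mp hy : (0 : ℝ) ≤ y) with h | h
    · exact ⟨none, trivial, h⟩
    · exact ⟨some (Real.log y, true), rfl, by simp [gval, Real.exp_log h]⟩

/-- The closed sets of the topology on `𝕋`: both the tangible and the ghost layers are
closed in the model `[0,∞)` of `𝕌̄`, and the ghost image of the tangible layer is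
contained in the set. -/
def TIsClosed (W : Set T) : Prop :=
  IsClosed (gval '' (W ∩ {x | isTangible x})) ∧
  IsClosed (gval '' (W ∩ {x | isGhost x})) ∧
  nu '' (W ∩ {x | isTangible x}) ⊆ W ∩ {x | isGhost x}

/-- The topology on `𝕋`. -/
noncomputable instance : TopologicalSpace T :=
  TopologicalSpace.ofClosed {W | TIsClosed W}
    (by
      refine ⟨?_, ?_, ?_⟩ <;> simp [TIsClosed])
    (fun A hA => by
      rcases A.eq_empty_or_nonempty with rfl | hne
      · rw [Set.sInter_empty]
        refine ⟨?_, ?_, ?_⟩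
        · rw [Set.univ_inter, gval_image_tang]; exact isClosed_Ici
        · rw [Set.univ_inter, gval_image_ghost]; exact isClosed_Ici
        · rintro y ⟨x, ⟨-, _⟩, rfl⟩
          exact ⟨trivial, nu_isGhost x⟩
      · have : Nonempty A := hne.to_subtype
        have h1 : (⋂₀ A) ∩ {x : T | isTangible x}
            = ⋂ (W : A), ((W : Set T) ∩ {x | isTangible x}) := by
          ext x
          simp only [Set.mem_inter_iff, Set.mem_sInter, Set.mem_iInter, Set.mem_setOf_eq]
          constructor
          · rintro ⟨h, ht⟩ W; exact ⟨h W W.2, ht⟩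
          · intro h
            obtain ⟨W, hW⟩ := hne
            exact ⟨fun V hV => (h ⟨V, hV⟩).1, (h ⟨W, hW⟩).2⟩
        have h2 : (⋂₀ A) ∩ {x : T | isGhost x}
            = ⋂ (W : A), ((W : Set T) ∩ {x | isGhost x}) := by
          ext x
          simp only [Set.mem_inter_iff, Set.mem_sInter, Set.mem_iInter, Set.mem_setOf_eq]
          constructor
          · rintro ⟨h, ht⟩ W; exact ⟨h W W.2, ht⟩
          · intro h
            obtain ⟨W, hW⟩ := hne
            exact ⟨fun V hV => (h ⟨V, hV⟩).1, (h ⟨W, hW⟩).2⟩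
        refine ⟨?_, ?_, ?_⟩
        · rw [h1, Set.InjOn.image_iInter_eq
            (gval_injOn_tang.mono (Set.iUnion_subset fun W => Set.inter_subset_right))]
          exact isClosed_iInter fun W => (hA W.2).1
        · rw [h2, Set.InjOn.image_iInter_eq
            (gval_injOn_ghost.mono (Set.iUnion_subset fun W => Set.inter_subset_right))]
          exact isClosed_iInter fun W => (hA W.2).2.1
        · rintro y ⟨x, ⟨hx, hxt⟩, rfl⟩
          refine ⟨fun W hW => ((hA hW).2.2 ⟨x, ⟨hx W hW, hxt⟩, rfl⟩).1, nu_isGhost x⟩)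
    (fun A hA B hB => by
      have h1 : (A ∪ B) ∩ {x : T | isTangible x}
          = (A ∩ {x | isTangible x}) ∪ (B ∩ {x | isTangible x}) :=
        Set.union_inter_distrib_right A B _
      have h2 : (A ∪ B) ∩ {x : T | isGhost x}
          = (A ∩ {x | isGhost x}) ∪ (B ∩ {x | isGhost x}) :=
        Set.union_inter_distrib_right A B _
      refine ⟨?_, ?_, ?_⟩
      · rw [h1, Set.image_union]; exact hA.1.union hB.1
      · rw [h2, Set.image_union]; exact hA.2.1.union hB.2.1
      · rintro y ⟨x, ⟨hx, hxt⟩, rfl⟩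
        rcases hx with hxA | hxB
        · have h := hA.2.2 ⟨x, ⟨hxA, hxt⟩, rfl⟩
          exact ⟨Or.inl h.1, h.2⟩
        · have h := hB.2.2 ⟨x, ⟨hxB, hxt⟩, rfl⟩
          exact ⟨Or.inr h.1, h.2⟩)

end T

namespace T

/-- Value map into `WithBot ℝ`. -/
noncomputable def val' : T → WithBot ℝ
  | none => ⊥
  | some (a, _) => (a : WithBot ℝ)

lemma zero_def : (0 : T) = none := rfl

lemma val'_zero : val' (0 : T) = ⊥ := rfl

lemma val'_eq_bot_iff : ∀ x : T, val' x = ⊥ ↔ x = 0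
  | none => by simp [val', zero_def]; rfl
  | some (a, s) => by simp [val', zero_def]

lemma val'_of_ne (x : T) (hx : x ≠ 0) : val' x = ((val x : ℝ) : WithBot ℝ) := by
  rcases x with _ | ⟨a, s⟩
  · exact absurd rfl hx
  · rfl

lemma add_def (x y : T) : x + y = add x y := rfl
lemma mul_def (x y : T) : x * y = mul x y := rfl

lemma val'_add (x y : T) : val' (x + y) = max (val' x) (val' y) := by
  show val' (add x y) = _
  rcases x with _ | ⟨a, s⟩ <;> rcases y with _ | ⟨b, t⟩ <;>
    simp only [add_def, add, val'] <;> try simp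
  unfold T
  split_ifs with h1 h2
  · simp [val', max_eq_right (le_of_lt (WithBot.coe_lt_coe.2 h1))]
  · simp [val', max_eq_left (le_of_lt (WithBot.coe_lt_coe.2 h2))]
  · have : a = b := le_antisymm (not_lt.1 h2) (not_lt.1 h1)
    simp [val', this]

lemma val'_mul (x y : T) : val' (x * y) = val' x + val' y := by
  show val' (mul x y) = _
  rcases x with _ | ⟨a, s⟩ <;> rcases y with _ | ⟨b, t⟩ <;>
    simp [mul_def, mul, val', ← WithBot.coe_add]

lemma val'_sum {ι : Type*} (s : Finset ι) (F : ι → T) :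
    val' (∑ i ∈ s, F i) = s.sup fun i => val' (F i) := by
  classical
  induction s using Finset.induction_on with
  | empty => simp [val'_zero]
  | insert _ _ h ih =>
      rw [Finset.sum_insert h, Finset.sup_insert, val'_add, ih]

lemma isGhost_zero : isGhost (0 : T) := trivial

lemma isGhost_add : ∀ x y : T, isGhost x → isGhost y → isGhost (x + y)
  | none, y, _, hy => hy
  | some p, none, hx, _ => hx
  | some (a, s), some (b, t), hx, hy => by
      show isGhost (add _ _)
      simp only [add]
      unfold T
      split_ifs <;> simp_all [isGhost]

lemma isGhost_mul_right : ∀ x y : T, isGhost y → isGhost (x * y)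
  | none, _, _ => trivial
  | some p, none, _ => trivial
  | some (a, s), some (b, t), hy => by
      have ht : t = true := hy
      show isGhost (mul _ _)
      simp [mul, isGhost, ht]

lemma isGhost_ghost (t : ℝ) : isGhost (ghost t) := rfl

lemma ghost_ne_zero (t : ℝ) : ghost t ≠ 0 := by simp [ghost, zero_def]; exact Option.some_ne_none _

lemma val'_pow_ghost (t : ℝ) : ∀ n : ℕ, val' ((ghost t) ^ n) = (((n : ℝ) * t : ℝ) : WithBot ℝ)
  | 0 => by
      rw [pow_zero, show val' (1 : T) = ((0 : ℝ) : WithBot ℝ) from rfl]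
      norm_num
  | n + 1 => by
      rw [pow_succ, val'_mul, val'_pow_ghost t n,
        show val' (ghost t) = ((t : ℝ) : WithBot ℝ) from rfl, ← WithBot.coe_add, WithBot.coe_inj]
      push_cast
      ring

lemma isGhost_pow_ghost (t : ℝ) : ∀ n : ℕ, 1 ≤ n → isGhost ((ghost t) ^ n)
  | 0, h => absurd h (by norm_num)
  | n + 1, _ => by rw [pow_succ]; exact isGhost_mul_right _ _ (isGhost_ghost t)

end T

/-- Lemma 1.1 / `lem:cl1`: if `f ∈ 𝕋[x]` is a nonconstant polynomial
with no constant monomial (constant coefficient `-∞`), then for every real `a` there is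
`r ∈ 𝕋` with `f(r) = a^ν`. -/
theorem tropical_ghost_value_attained (f : Polynomial T)
    (hnc : ∀ c : T, f ≠ Polynomial.C c) (h0 : f.coeff 0 = 0) (a : ℝ) :
    ∃ r : T, f.eval r = T.ghost a := by
  classical
  set d := f.natDegree with hd
  have hf0 : f ≠ 0 := fun h => hnc 0 (by simp [h])
  have hd1 : 1 ≤ d := by
    by_contra h
    push_neg at h
    exact hnc (f.coeff 0) (Polynomial.eq_C_of_natDegree_eq_zero (Nat.lt_one_iff.1 h))
  set S : Finset ℕ := (Finset.range (d + 1)).filter (fun i => f.coeff i ≠ 0) with hSdef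
  have hdS : d ∈ S := by
    simp only [hSdef, Finset.mem_filter, Finset.mem_range]
    exact ⟨Nat.lt_succ_self d, Polynomial.leadingCoeff_ne_zero.2 hf0⟩
  have hSne : S.Nonempty := ⟨d, hdS⟩
  have hS1 : ∀ i ∈ S, 1 ≤ i := by
    intro i hi
    rcases Nat.eq_zero_or_pos i with rfl | hpos
    · simp only [hSdef, Finset.mem_filter] at hi
      exact absurd h0 hi.2
    · exact hpos
  set v : ℕ → ℝ := fun i => T.val (f.coeff i) with hv
  set g : ℝ → ℝ := fun t => S.sup' hSne (fun i => v i + i * t) with hg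
  have hcont : Continuous g := by
    apply Continuous.finset_sup'_apply hSne
    intro i _
    continuity
  set V : ℝ := S.sup' hSne v with hV
  set t1 : ℝ := min 0 (a - V - 1) with ht1
  set t2 : ℝ := max 0 (a - v d + 1) with ht2
  have h12 : t1 ≤ t2 := le_trans (min_le_left _ _) (le_max_left _ _)
  have hb1 : g t1 ≤ a := by
    apply Finset.sup'_le
    intro i hi
    have h1 : v i ≤ V := Finset.le_sup' v hi
    have h2 : (i : ℝ) * t1 ≤ 1 * t1 :=
      mul_le_mul_of_nonpos_right (by exact_mod_cast hS1 i hi) (min_le_left _ _)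
    have h3 : t1 ≤ a - V - 1 := min_le_right _ _
    simp only [one_mul] at h2
    linarith
  have hb2 : a ≤ g t2 := by
    have h1 : v d + (d : ℝ) * t2 ≤ g t2 := Finset.le_sup' (fun i => v i + i * t2) hdS
    have h2 : 1 * t2 ≤ (d : ℝ) * t2 :=
      mul_le_mul_of_nonneg_right (by exact_mod_cast hd1) (le_max_left _ _)
    have h3 : a - v d + 1 ≤ t2 := le_max_right _ _
    simp only [one_mul] at h2
    linarith
  obtain ⟨t, -, ht⟩ := intermediate_value_Icc h12 hcont.continuousOn ⟨hb1, hb2⟩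
  refine ⟨T.ghost t, ?_⟩
  have heval : f.eval (T.ghost t) =
      ∑ i ∈ Finset.range (d + 1), f.coeff i * (T.ghost t) ^ i :=
    Polynomial.eval_eq_sum_range (p := f) (T.ghost t)
  have hghost : T.isGhost (f.eval (T.ghost t)) := by
    rw [heval]
    apply Finset.sum_induction _ T.isGhost T.isGhost_add T.isGhost_zero
    intro i _
    rcases Nat.eq_zero_or_pos i with rfl | hpos
    · rw [h0, zero_mul]; exact T.isGhost_zero
    · exact T.isGhost_mul_right _ _ (T.isGhost_pow_ghost t i hpos)
  have hterm : ∀ i ∈ S,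
      T.val' (f.coeff i * (T.ghost t) ^ i) = ((v i + i * t : ℝ) : WithBot ℝ) := by
    intro i hi
    simp only [hSdef, Finset.mem_filter] at hi
    rw [T.val'_mul, T.val'_of_ne _ hi.2, T.val'_pow_ghost, ← WithBot.coe_add]
  have hval : T.val' (f.eval (T.ghost t)) = ((a : ℝ) : WithBot ℝ) := by
    rw [heval, T.val'_sum]
    apply le_antisymm
    · apply Finset.sup_le
      intro i hi
      by_cases hc : f.coeff i = 0
      · rw [T.val'_mul, hc, T.val'_zero, WithBot.bot_add]
        exact bot_le
      · have hiS : i ∈ S := by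
          simp only [hSdef, Finset.mem_filter]; exact ⟨hi, hc⟩
        rw [hterm i hiS]
        rw [← ht]
        exact_mod_cast WithBot.coe_le_coe.2 (Finset.le_sup' (fun i => v i + i * t) hiS)
    · have : ((a : ℝ) : WithBot ℝ) = S.sup fun i => T.val' (f.coeff i * (T.ghost t) ^ i) := by
        rw [← ht, hg, Finset.coe_sup' hSne]
        exact Finset.sup_congr rfl fun i hi => (hterm i hi).symm
      rw [this]
      exact Finset.sup_mono (Finset.filter_subset _ _)
  rcases hx : f.eval (T.ghost t) with _ | ⟨b, s⟩
  · rw [hx] at hval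
    exact absurd hval (by simp [T.val'])
  · rw [hx] at hval hghost
    have hb : b = a := by
      have : ((b : ℝ) : WithBot ℝ) = a := hval
      exact_mod_cast this
    have hs : s = true := hghost
    rw [hb, hs]; rfl
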